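/- The monotone rearrangement operator is continuous as a map from L^p(Ω, m) to L^p([0,r], m_{K,N}): if u_n → u in L^p then u_n* → u* in L^p. -/

import Mathlib

open MeasureTheory Filter Topology Set ENNReal

noncomputable section

/-- Slope (local Lipschitz constant) of a real-valued function on a metric space. -/
def mslope {X : Type*} [PseudoMetricSpace X] (f : X → ℝ) (x : X) : ℝ :=
  Filter.limsup (fun y => |f x - f y| / dist x y) (𝓝[≠] x)

/-- A metric space is geodesic if every pair of points is joined by a
constant-speed geodesic defined on `[0,1]`. -/
def IsGeodesicSpace (X : Type*) [PseudoMetricSpace X] : Prop :=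
  ∀ x y : X, ∃ γ : ℝ → X, γ 0 = x ∧ γ 1 = y ∧
    ∀ s ∈ Set.Icc (0:ℝ) 1, ∀ t ∈ Set.Icc (0:ℝ) 1, dist (γ s) (γ t) = |s - t| * dist x y

/-- Relative total variation of `f` on `A`: relaxation of `∫_A` slope with
respect to `L¹(A)` convergence of Lipschitz approximations. -/
def relTV {X : Type*} [PseudoMetricSpace X] [MeasurableSpace X] (m : Measure X)
    (f : X → ℝ) (A : Set X) : ℝ≥0∞ :=
  sInf { p | ∃ u : ℕ → X → ℝ, (∀ n, ∃ L, LipschitzWith L (u n)) ∧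
    Tendsto (fun n => ∫⁻ x in A, ENNReal.ofReal |u n x - f x| ∂m) atTop (𝓝 0) ∧
    p = liminf (fun n => ∫⁻ x in A, ENNReal.ofReal (mslope (u n) x) ∂m) atTop }

/-- Relative perimeter of a set `E` in `A`. -/
def relPer {X : Type*} [PseudoMetricSpace X] [MeasurableSpace X] (m : Measure X)
    (E A : Set X) : ℝ≥0∞ :=
  relTV m (Set.indicator E (fun _ => 1)) A

/-- Cheeger `p`-energy (without the `1/p` factor): relaxation of `∫ (slope)^p`. -/
def cheegerE {X : Type*} [PseudoMetricSpace X] [MeasurableSpace X] (m : Measure X) (p : ℝ)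
    (f : X → ℝ) : ℝ≥0∞ :=
  sInf { e | ∃ u : ℕ → X → ℝ, (∀ n, ∃ L, LipschitzWith L (u n)) ∧
    Tendsto (fun n => ∫⁻ x, ENNReal.ofReal |u n x - f x| ^ p ∂m) atTop (𝓝 0) ∧
    e = liminf (fun n => ∫⁻ x, ENNReal.ofReal (mslope (u n) x) ^ p ∂m) atTop }

/-- Isoperimetric profile of a metric measure space. -/
def isoProfile {X : Type*} [PseudoMetricSpace X] [MeasurableSpace X] (m : Measure X)
    (v : ℝ) : ℝ :=
  sInf { p | ∃ E : Set X, MeasurableSet E ∧ (m E).toReal = v ∧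
    p = (relPer m E Set.univ).toReal }

/-- Length `π √((N-1)/K)` of the one-dimensional model space `I_{K,N}`. -/
def modelLength (K N : ℝ) : ℝ := Real.pi * Real.sqrt ((N - 1) / K)

/-- Density `sin(t √(K/(N-1)))^(N-1)` of the model measure. -/
def modelDensity (K N t : ℝ) : ℝ := Real.sin (t * Real.sqrt (K / (N - 1))) ^ (N - 1)

/-- Normalizing constant `c_{K,N}`. -/
def modelCoef (K N : ℝ) : ℝ := ∫ t in Set.Ioo 0 (modelLength K N), modelDensity K N t

/-- The normalized model measure `m_{K,N}` on `I_{K,N} ⊆ ℝ`. -/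
def modelMeasure (K N : ℝ) : Measure ℝ :=
  (volume.restrict (Set.Ioo 0 (modelLength K N))).withDensity
    (fun t => ENNReal.ofReal (modelDensity K N t / modelCoef K N))

/-- Distribution function `μ(t) = m({u > t})`. -/
def distribF {X : Type*} [MeasurableSpace X] (m : Measure X) (u : X → ℝ) (t : ℝ) : ℝ :=
  (m {x | u x > t}).toReal

/-- Generalized inverse `u^#` of the distribution function. -/
def genInv {X : Type*} [MeasurableSpace X] (m : Measure X) (u : X → ℝ) (s : ℝ) : ℝ :=
  if s = 0 then essSup u m else sInf {t | distribF m u t < s}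

/-- Monotone (decreasing) rearrangement of `u` onto the model interval. -/
def rearr {X : Type*} [MeasurableSpace X] (m : Measure X) (u : X → ℝ) (K N : ℝ) (x : ℝ) : ℝ :=
  genInv m u ((modelMeasure K N (Set.Icc 0 x)).toReal)

/-- Essentially non-branching `CD(K,N)` condition with `K > 0`, encoded through the
synthetic properties used throughout the paper: geodesic metric space, normalized
reference measure, and the Lévy–Gromov isoperimetric inequality of
Cavalletti–Mondino (valid exactly on essentially non-branching `CD(K,N)` spaces). -/
structure EssNonbranchingCD (X : Type*) [MetricSpace X] [MeasurableSpace X] (m : Measure X)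
    (K N : ℝ) : Prop where
  posK : 0 < K
  oneltN : 1 < N
  prob : m Set.univ = 1
  geodesic : IsGeodesicSpace X
  levyGromov : ∀ E : Set X, MeasurableSet E →
    isoProfile (modelMeasure K N) ((m E).toReal) ≤ (relPer m E Set.univ).toReal

/-- `RCD(K,N)` condition: `CD(K,N)` plus infinitesimal Hilbertianity
(parallelogram identity for the Cheeger 2-energy). -/
structure RCDsp (X : Type*) [MetricSpace X] [MeasurableSpace X] (m : Measure X)
    (K N : ℝ) extends EssNonbranchingCD X m K N : Prop where
  hilbertian : ∀ f g : X → ℝ,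
    cheegerE m 2 (fun x => f x + g x) + cheegerE m 2 (fun x => f x - g x)
      = 2 * cheegerE m 2 f + 2 * cheegerE m 2 g

/-- Membership in `W^{1,p}_0(Ω)`: limit in `W^{1,p}` norm of compactly supported
Lipschitz functions on `Ω`. -/
def memW1p0 {X : Type*} [MetricSpace X] [MeasurableSpace X] (m : Measure X) (p : ℝ)
    (Ω : Set X) (u : X → ℝ) : Prop :=
  ∃ v : ℕ → X → ℝ,
    (∀ n, (∃ L, LipschitzWith L (v n)) ∧ HasCompactSupport (v n) ∧ tsupport (v n) ⊆ Ω) ∧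
    Tendsto (fun n => ∫⁻ x, ENNReal.ofReal |v n x - u x| ^ p ∂m) atTop (𝓝 0) ∧
    Tendsto (fun n => cheegerE m p (fun x => v n x - u x)) atTop (𝓝 0)

end

noncomputable section RearrProofAux
namespace RearrProof
open MeasureTheory Filter Topology Set ENNReal

lemma modelLength_pos {K N : ℝ} (hK : 0 < K) (hN : 1 < N) : 0 < modelLength K N := by
  have h : 0 < Real.sqrt ((N - 1) / K) := Real.sqrt_pos.2 (div_pos (by linarith) hK)
  exact mul_pos Real.pi_pos h

lemma sqrt_mul_sqrt_eq_one {K N : ℝ} (hK : 0 < K) (hN : 1 < N) :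
    Real.sqrt ((N - 1) / K) * Real.sqrt (K / (N - 1)) = 1 := by
  have h2 : N - 1 ≠ 0 := by linarith
  have h3 : K ≠ 0 := ne_of_gt hK
  rw [← Real.sqrt_mul (le_of_lt (div_pos (by linarith) hK))]
  have : (N - 1) / K * (K / (N - 1)) = 1 := by
    field_simp
  rw [this, Real.sqrt_one]

lemma sin_pos_of_mem {K N t : ℝ} (hK : 0 < K) (hN : 1 < N)
    (ht : t ∈ Set.Ioo 0 (modelLength K N)) :
    0 < Real.sin (t * Real.sqrt (K / (N - 1))) := by
  have hs : 0 < Real.sqrt (K / (N - 1)) := Real.sqrt_pos.2 (div_pos hK (by linarith))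
  apply Real.sin_pos_of_pos_of_lt_pi (mul_pos ht.1 hs)
  have := mul_lt_mul_of_pos_right ht.2 hs
  rwa [modelLength, mul_assoc, sqrt_mul_sqrt_eq_one hK hN, mul_one] at this

lemma density_pos {K N t : ℝ} (hK : 0 < K) (hN : 1 < N)
    (ht : t ∈ Set.Ioo 0 (modelLength K N)) : 0 < modelDensity K N t :=
  Real.rpow_pos_of_pos (sin_pos_of_mem hK hN ht) _

lemma density_le_one {K N t : ℝ} (hK : 0 < K) (hN : 1 < N)
    (ht : t ∈ Set.Ioo 0 (modelLength K N)) : modelDensity K N t ≤ 1 :=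
  Real.rpow_le_one (sin_pos_of_mem hK hN ht).le (Real.sin_le_one _) (by linarith)

lemma density_measurable (K N : ℝ) (hN : 1 < N) : Measurable (modelDensity K N) := by
  have : Continuous (modelDensity K N) := by
    apply Continuous.rpow_const (by continuity)
    exact fun x => Or.inr (by linarith)
  exact this.measurable

lemma modelMeasure_apply {K N : ℝ} {s : Set ℝ} (hs : MeasurableSet s) :
    modelMeasure K N s
      = ∫⁻ t in s ∩ Set.Ioo 0 (modelLength K N),
          ENNReal.ofReal (modelDensity K N t / modelCoef K N) ∂volume := by
  rw [modelMeasure, withDensity_apply _ hs, Measure.restrict_restrict hs]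

lemma modelMeasure_eq_zero {K N : ℝ} (hK : 0 < K) (hN : 1 < N)
    (hc : modelCoef K N ≤ 0) : modelMeasure K N = 0 := by
  rw [modelMeasure]
  have h : (fun t => ENNReal.ofReal (modelDensity K N t / modelCoef K N))
      =ᵐ[volume.restrict (Set.Ioo 0 (modelLength K N))] 0 := by
    filter_upwards [ae_restrict_mem measurableSet_Ioo] with t ht
    have hd : 0 ≤ modelDensity K N t := (density_pos hK hN ht).le
    have : modelDensity K N t / modelCoef K N ≤ 0 := div_nonpos_iff.2 (Or.inl ⟨hd, hc⟩)
    simp [ENNReal.ofReal_eq_zero.2 this]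
  rw [withDensity_congr_ae h, withDensity_zero]

lemma modelMeasure_le {K N : ℝ} (hK : 0 < K) (hN : 1 < N) (hc : 0 < modelCoef K N)
    {s : Set ℝ} (hs : MeasurableSet s) :
    modelMeasure K N s ≤ ENNReal.ofReal (modelCoef K N)⁻¹ * volume s := by
  rw [modelMeasure_apply hs]
  calc ∫⁻ t in s ∩ Set.Ioo 0 (modelLength K N),
        ENNReal.ofReal (modelDensity K N t / modelCoef K N) ∂volume
      ≤ ∫⁻ _ in s ∩ Set.Ioo 0 (modelLength K N),
          ENNReal.ofReal (modelCoef K N)⁻¹ ∂volume := by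
        apply lintegral_mono_ae
        filter_upwards [ae_restrict_mem (hs.inter measurableSet_Ioo)] with t ht
        apply ENNReal.ofReal_le_ofReal
        rw [← one_div]
        gcongr
        exact density_le_one hK hN ht.2
    _ = ENNReal.ofReal (modelCoef K N)⁻¹ * volume (s ∩ Set.Ioo 0 (modelLength K N)) := by
        rw [setLIntegral_const]
    _ ≤ ENNReal.ofReal (modelCoef K N)⁻¹ * volume s := by
        gcongr
        exact Set.inter_subset_left

end RearrProof
namespace RearrProof
open MeasureTheory Filter Topology Set ENNReal

section GenInv
variable {Y : Type*} [MeasurableSpace Y] (μ : Measure Y) [IsFiniteMeasure μ] {v : Y → ℝ}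

lemma distribF_anti : Antitone (distribF μ v) := fun t t' h =>
  ENNReal.toReal_mono (measure_ne_top _ _)
    (measure_mono (fun x hx => lt_of_le_of_lt h hx))

lemma distribF_le_univ (t : ℝ) : distribF μ v t ≤ (μ Set.univ).toReal :=
  ENNReal.toReal_mono (measure_ne_top _ _) (measure_mono (Set.subset_univ _))

lemma distribF_of_neg (hv0 : ∀ x, 0 ≤ v x) {t : ℝ} (ht : t < 0) :
    distribF μ v t = (μ Set.univ).toReal := by
  unfold distribF
  congr 1
  exact congrArg μ (Set.eq_univ_of_forall fun x => lt_of_lt_of_le ht (hv0 x))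

lemma exists_distribF_lt (hv : Measurable v) {s : ℝ} (hs : 0 < s) :
    ∃ t, distribF μ v t < s := by
  have hmeas : ∀ n : ℕ, NullMeasurableSet {x | v x > (n : ℝ)} μ := fun n =>
    (measurableSet_lt measurable_const hv).nullMeasurableSet
  have hdir : Directed (· ⊇ ·) (fun n : ℕ => {x | v x > (n : ℝ)}) := fun m n =>
    ⟨max m n, fun x hx => show v x > (m : ℝ) from
        lt_of_le_of_lt (Nat.cast_le.2 (le_max_left m n)) hx,
      fun x hx => show v x > (n : ℝ) from
        lt_of_le_of_lt (Nat.cast_le.2 (le_max_right m n)) hx⟩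
  have h1 : (⋂ n : ℕ, {x | v x > (n : ℝ)}) = ∅ := by
    ext x
    simp only [Set.mem_iInter, Set.mem_setOf_eq, Set.mem_empty_iff_false, iff_false, not_forall,
      not_lt]
    obtain ⟨n, hn⟩ := exists_nat_gt (v x)
    exact ⟨n, hn.le⟩
  have h2 := Directed.measure_iInter hmeas hdir ⟨0, measure_ne_top μ _⟩
  rw [h1, measure_empty] at h2
  have h3 : ⨅ n : ℕ, μ {x | v x > (n : ℝ)} < ENNReal.ofReal s := by
    rw [← h2]; exact ENNReal.ofReal_pos.2 hs
  obtain ⟨n, hn⟩ := iInf_lt_iff.1 h3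
  exact ⟨n, (ENNReal.lt_ofReal_iff_toReal_lt (measure_ne_top μ _)).1 hn⟩

lemma lt_distribF_exists (hv : Measurable v) {b s : ℝ} (h : s < distribF μ v b) :
    ∃ δ > 0, s < distribF μ v (b + δ) := by
  have hdir : Directed (· ⊆ ·) (fun n : ℕ => {x | v x > b + 1 / (n + 1)}) := by
    intro m n
    refine ⟨max m n, fun x hx => show v x > b + 1 / ((max m n : ℕ) + 1) from
        lt_of_le_of_lt ?_ hx,
      fun x hx => show v x > b + 1 / ((max m n : ℕ) + 1) from lt_of_le_of_lt ?_ hx⟩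
    · have : (1 : ℝ) / (max m n + 1) ≤ 1 / (m + 1) := by
        apply one_div_le_one_div_of_le (by positivity)
        have : (m : ℝ) ≤ max m n := Nat.cast_le.2 (le_max_left m n)
        linarith
      linarith
    · have : (1 : ℝ) / (max m n + 1) ≤ 1 / (n + 1) := by
        apply one_div_le_one_div_of_le (by positivity)
        have : (n : ℝ) ≤ max m n := Nat.cast_le.2 (le_max_right m n)
        linarith
      linarith
  have hU : {x | v x > b} = ⋃ n : ℕ, {x | v x > b + 1 / (n + 1)} := by
    ext x
    simp only [Set.mem_setOf_eq, Set.mem_iUnion]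
    constructor
    · intro hx
      obtain ⟨n, hn⟩ := exists_nat_one_div_lt (sub_pos.2 hx)
      exact ⟨n, by linarith⟩
    · rintro ⟨n, hn⟩
      have : (0 : ℝ) < 1 / (n + 1) := by positivity
      linarith
  obtain ⟨n, hn⟩ : ∃ n : ℕ, s < (μ {x | v x > b + 1 / (n + 1)}).toReal := by
    by_contra hcon
    push_neg at hcon
    have hs0 : 0 ≤ s := le_trans ENNReal.toReal_nonneg (hcon 0)
    have hle : ∀ n : ℕ, μ {x | v x > b + 1 / (n + 1)} ≤ ENNReal.ofReal s := fun n =>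
      (ENNReal.le_ofReal_iff_toReal_le (measure_ne_top _ _) hs0).2 (hcon n)
    have hle2 : μ {x | v x > b} ≤ ENNReal.ofReal s := by
      rw [hU, Directed.measure_iUnion hdir]
      exact iSup_le hle
    have := ENNReal.toReal_mono ENNReal.ofReal_ne_top hle2
    rw [ENNReal.toReal_ofReal hs0] at this
    exact absurd h (not_lt.2 this)
  exact ⟨1 / (n + 1), by positivity, hn⟩

lemma distribF_subset_Ici (hv0 : ∀ x, 0 ≤ v x) {s : ℝ} (hs : s ≤ (μ Set.univ).toReal) :
    {t | distribF μ v t < s} ⊆ Set.Ici 0 := by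
  intro t ht
  by_contra hneg
  simp only [Set.mem_Ici, not_le] at hneg
  rw [Set.mem_setOf_eq, distribF_of_neg μ hv0 hneg] at ht
  exact absurd (lt_of_lt_of_le ht hs) (lt_irrefl _)

lemma genInv_nonneg (hv0 : ∀ x, 0 ≤ v x) {s : ℝ} (hs : 0 < s)
    (hs' : s ≤ (μ Set.univ).toReal) : 0 ≤ genInv μ v s := by
  rw [genInv, if_neg (ne_of_gt hs)]
  exact Real.sInf_nonneg fun t ht => distribF_subset_Ici μ hv0 hs' ht

lemma le_distribF_of_lt_genInv (hv0 : ∀ x, 0 ≤ v x) {s a : ℝ} (hs : 0 < s)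
    (hs' : s ≤ (μ Set.univ).toReal) (h : a < genInv μ v s) : s ≤ distribF μ v a := by
  rw [genInv, if_neg (ne_of_gt hs)] at h
  by_contra hc
  push_neg at hc
  have hb : BddBelow {t | distribF μ v t < s} :=
    ⟨0, fun t ht => distribF_subset_Ici μ hv0 hs' ht⟩
  have := csInf_le hb hc
  linarith

lemma distribF_le_of_genInv_le (hv : Measurable v) {s b : ℝ} (hs : 0 < s)
    (h : genInv μ v s ≤ b) : distribF μ v b ≤ s := by
  by_contra hc
  push_neg at hc
  obtain ⟨δ, hδ, hsd⟩ := lt_distribF_exists μ hv hc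
  obtain ⟨t0, ht0⟩ := exists_distribF_lt μ hv hs
  have hlow : ∀ t ∈ {t | distribF μ v t < s}, b + δ ≤ t := by
    intro t ht
    by_contra hlt
    push_neg at hlt
    have := distribF_anti μ (v := v) (le_of_lt hlt)
    rw [Set.mem_setOf_eq] at ht
    linarith
  have : b + δ ≤ sInf {t | distribF μ v t < s} := le_csInf ⟨t0, ht0⟩ hlow
  rw [genInv, if_neg (ne_of_gt hs)] at h
  linarith

lemma genInv_anti (hv : Measurable v) (hv0 : ∀ x, 0 ≤ v x) {s s' : ℝ} (hs : 0 < s)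
    (hss' : s ≤ s') : genInv μ v s' ≤ genInv μ v s := by
  have hs'0 : 0 < s' := lt_of_lt_of_le hs hss'
  rw [genInv, if_neg (ne_of_gt hs'0), genInv, if_neg (ne_of_gt hs)]
  by_cases hM : s' ≤ (μ Set.univ).toReal
  · apply csInf_le_csInf
    · exact ⟨0, fun t ht => distribF_subset_Ici μ hv0 hM ht⟩
    · exact exists_distribF_lt μ hv hs
    · exact fun t ht => lt_of_lt_of_le ht hss'
  · push_neg at hM
    have huniv : {t | distribF μ v t < s'} = Set.univ :=
      Set.eq_univ_of_forall fun t => lt_of_le_of_lt (distribF_le_univ μ t) hM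
    rw [huniv]
    have hnb : ¬BddBelow (Set.univ : Set ℝ) := by
      rintro ⟨c, hc⟩
      have := hc (Set.mem_univ (c - 1))
      linarith
    rw [Real.sInf_of_not_bddBelow hnb]
    by_cases hM2 : s ≤ (μ Set.univ).toReal
    · exact Real.sInf_nonneg fun t ht => distribF_subset_Ici μ hv0 hM2 ht
    · push_neg at hM2
      rw [show {t | distribF μ v t < s} = Set.univ from
        Set.eq_univ_of_forall fun t => lt_of_le_of_lt (distribF_le_univ μ t) hM2,
        Real.sInf_of_not_bddBelow hnb]

end GenInv
end RearrProof
namespace RearrProof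
open MeasureTheory Filter Topology Set ENNReal

lemma lintegral_kernelA {p b f0 : ℝ} (hp : 1 < p) (hbf : b < f0) :
    ∫⁻ a in Set.Ioo b f0, ENNReal.ofReal (p * (p - 1) * (a - b) ^ (p - 2)) ∂volume
      = ENNReal.ofReal (p * (f0 - b) ^ (p - 1)) := by
  rw [Measure.restrict_congr_set Ioo_ae_eq_Ioc]
  have hint : IntervalIntegrable (fun a => p * (p - 1) * (a - b) ^ (p - 2)) volume b f0 := by
    have h1 := (intervalIntegral.intervalIntegrable_rpow'
      (show (-1 : ℝ) < p - 2 by linarith) (a := 0) (b := f0 - b)).comp_sub_right b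
    simp only [zero_add, sub_add_cancel] at h1
    exact h1.const_mul _
  have hInt : IntegrableOn (fun a => p * (p - 1) * (a - b) ^ (p - 2)) (Set.Ioc b f0) volume :=
    (intervalIntegrable_iff_integrableOn_Ioc_of_le hbf.le).1 hint
  have hnn : 0 ≤ᵐ[volume.restrict (Set.Ioc b f0)]
      fun a => p * (p - 1) * (a - b) ^ (p - 2) := by
    filter_upwards [ae_restrict_mem measurableSet_Ioc] with a ha
    have h0 : (0:ℝ) ≤ a - b := by linarith [ha.1]
    exact mul_nonneg (mul_nonneg (by linarith) (by linarith)) (Real.rpow_nonneg h0 _)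
  rw [← ofReal_integral_eq_lintegral_ofReal hInt hnn]
  congr 1
  have e1 : ∫ a in Set.Ioc b f0, p * (p - 1) * (a - b) ^ (p - 2) ∂volume
      = ∫ a in b..f0, p * (p - 1) * (a - b) ^ (p - 2) :=
    (intervalIntegral.integral_of_le hbf.le).symm
  rw [e1, intervalIntegral.integral_const_mul,
    intervalIntegral.integral_comp_sub_right (fun x => x ^ (p - 2)) b, sub_self,
    integral_rpow (Or.inl (by linarith))]
  have h2 : p - 2 + 1 = p - 1 := by ring
  rw [h2, Real.zero_rpow (by intro h; linarith [h] : p - 1 ≠ 0)]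
  have h3 : p - 1 ≠ 0 := by intro h; linarith [h]
  field_simp
  ring

lemma lintegral_kernelB {p g0 f0 : ℝ} (hp : 1 ≤ p) (hgf : g0 < f0) :
    ∫⁻ b in Set.Ico g0 f0, ENNReal.ofReal (p * (f0 - b) ^ (p - 1)) ∂volume
      = ENNReal.ofReal ((f0 - g0) ^ p) := by
  rw [Measure.restrict_congr_set Ico_ae_eq_Ioc]
  have hp0 : (0:ℝ) < p := by linarith
  have hint : IntervalIntegrable (fun x => p * (f0 - x) ^ (p - 1)) volume g0 f0 := by
    have h1 := (intervalIntegral.intervalIntegrable_rpow'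
      (show (-1 : ℝ) < p - 1 by linarith) (a := 0) (b := f0 - g0)).comp_sub_left f0
    have e : f0 - (f0 - g0) = g0 := by ring
    rw [sub_zero, e] at h1
    exact (h1.symm).const_mul _
  have hInt : IntegrableOn (fun x => p * (f0 - x) ^ (p - 1)) (Set.Ioc g0 f0) volume :=
    (intervalIntegrable_iff_integrableOn_Ioc_of_le hgf.le).1 hint
  have hnn : 0 ≤ᵐ[volume.restrict (Set.Ioc g0 f0)] fun x => p * (f0 - x) ^ (p - 1) := by
    filter_upwards [ae_restrict_mem measurableSet_Ioc] with x hx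
    have h0 : (0:ℝ) ≤ f0 - x := by linarith [hx.2]
    exact mul_nonneg (by linarith) (Real.rpow_nonneg h0 _)
  rw [← ofReal_integral_eq_lintegral_ofReal hInt hnn]
  congr 1
  have e1 : ∫ x in Set.Ioc g0 f0, p * (f0 - x) ^ (p - 1) ∂volume
      = ∫ x in g0..f0, p * (f0 - x) ^ (p - 1) :=
    (intervalIntegral.integral_of_le hgf.le).symm
  rw [e1, intervalIntegral.integral_const_mul,
    intervalIntegral.integral_comp_sub_left (fun x => x ^ (p - 1)) f0, sub_self,
    integral_rpow (Or.inl (by linarith))]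
  have h2 : p - 1 + 1 = p := by ring
  rw [h2, Real.zero_rpow (ne_of_gt hp0)]
  field_simp
  ring

end RearrProof
namespace RearrProof
open MeasureTheory Filter Topology Set ENNReal

def kerGT (p : ℝ) : ℝ × ℝ → ℝ≥0∞ := fun z =>
  if z.2 < z.1 then ENNReal.ofReal (p * (p - 1) * (z.1 - z.2) ^ (p - 2)) else 0

lemma kerGT_measurable (p : ℝ) : Measurable (kerGT p) := by
  apply Measurable.ite (measurableSet_lt measurable_snd measurable_fst)
  · fun_prop
  · exact measurable_const

lemma indicator_set_measurable (f0 g0 : ℝ) :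
    MeasurableSet {w : ℝ × ℝ | w.1 < f0 ∧ g0 ≤ w.2} := by
  have : {w : ℝ × ℝ | w.1 < f0 ∧ g0 ≤ w.2}
      = {w : ℝ × ℝ | w.1 < f0} ∩ {w : ℝ × ℝ | g0 ≤ w.2} := rfl
  rw [this]
  exact (measurableSet_lt measurable_fst measurable_const).inter
    (measurableSet_le measurable_const measurable_snd)

lemma rep_gt_one {p : ℝ} (hp : 1 < p) (f0 g0 : ℝ) (hg0 : 0 ≤ g0) :
    ∫⁻ z : ℝ × ℝ, kerGT p z * ({w : ℝ × ℝ | w.1 < f0 ∧ g0 ≤ w.2}.indicator 1 z) ∂volume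
      = ENNReal.ofReal (f0 - g0) ^ p := by
  have hmeasInt : Measurable (fun z : ℝ × ℝ =>
      kerGT p z * ({w : ℝ × ℝ | w.1 < f0 ∧ g0 ≤ w.2}.indicator 1 z)) :=
    (kerGT_measurable p).mul
      (Measurable.indicator measurable_const (indicator_set_measurable f0 g0))
  rw [MeasureTheory.Measure.volume_eq_prod, lintegral_prod_symm _ hmeasInt.aemeasurable]
  have hinner : ∀ b : ℝ, (∫⁻ a, kerGT p (a, b)
        * ({w : ℝ × ℝ | w.1 < f0 ∧ g0 ≤ w.2}.indicator 1 (a, b)) ∂volume)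
      = (Set.Ico g0 f0).indicator (fun b => ENNReal.ofReal (p * (f0 - b) ^ (p - 1))) b := by
    intro b
    by_cases hb : g0 ≤ b
    · have heq : (fun a : ℝ => kerGT p (a, b)
          * ({w : ℝ × ℝ | w.1 < f0 ∧ g0 ≤ w.2}.indicator 1 (a, b)))
          = (Set.Ioo b f0).indicator
              (fun a => ENNReal.ofReal (p * (p - 1) * (a - b) ^ (p - 2))) := by
        funext a
        simp only [kerGT, Set.indicator_apply, Set.mem_setOf_eq, Set.mem_Ioo]
        by_cases h1 : b < a <;> by_cases h2 : a < f0 <;>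
          simp [h1, h2, hb, Pi.one_apply]
      rw [heq, lintegral_indicator measurableSet_Ioo]
      by_cases hbf : b < f0
      · rw [lintegral_kernelA hp hbf, Set.indicator_of_mem (Set.mem_Ico.2 ⟨hb, hbf⟩)]
      · rw [Set.Ioo_eq_empty hbf, Measure.restrict_empty, lintegral_zero_measure,
          Set.indicator_of_notMem (fun hmem => hbf (Set.mem_Ico.1 hmem).2)]
    · have heq : (fun a : ℝ => kerGT p (a, b)
          * ({w : ℝ × ℝ | w.1 < f0 ∧ g0 ≤ w.2}.indicator 1 (a, b))) = fun _ => 0 := by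
        funext a
        simp [Set.indicator_apply, hb]
      rw [heq, lintegral_const, zero_mul,
        Set.indicator_of_notMem (fun hmem => hb (Set.mem_Ico.1 hmem).1)]
  rw [lintegral_congr hinner, lintegral_indicator measurableSet_Ico]
  rcases lt_or_ge g0 f0 with hgf | hgf
  · rw [lintegral_kernelB hp.le hgf, ENNReal.ofReal_rpow_of_nonneg (by linarith) (by linarith)]
  · rw [Set.Ico_eq_empty (not_lt.2 hgf), Measure.restrict_empty, lintegral_zero_measure,
      ENNReal.ofReal_of_nonpos (by linarith), ENNReal.zero_rpow_of_pos (by linarith)]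

lemma rep_one (f0 g0 : ℝ) (hg0 : 0 ≤ g0) :
    ∫⁻ z : ℝ × ℝ, (1 : ℝ≥0∞) * ({w : ℝ × ℝ | w.1 < f0 ∧ g0 ≤ w.2}.indicator 1 z)
        ∂(volume.map (fun t : ℝ => (t, t)))
      = ENNReal.ofReal (f0 - g0) ^ (1 : ℝ) := by
  have hdiag : Measurable (fun t : ℝ => (t, t)) := measurable_id.prodMk measurable_id
  have hmeasInt : Measurable (fun z : ℝ × ℝ =>
      (1 : ℝ≥0∞) * ({w : ℝ × ℝ | w.1 < f0 ∧ g0 ≤ w.2}.indicator 1 z)) :=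
    measurable_const.mul
      (Measurable.indicator measurable_const (indicator_set_measurable f0 g0))
  rw [lintegral_map hmeasInt hdiag]
  have heq : (fun t : ℝ => (1 : ℝ≥0∞)
      * ({w : ℝ × ℝ | w.1 < f0 ∧ g0 ≤ w.2}.indicator 1 (t, t)))
      = (Set.Ico g0 f0).indicator 1 := by
    funext t
    simp only [one_mul, Set.indicator_apply, Set.mem_setOf_eq, Set.mem_Ico]
    by_cases h1 : t < f0 <;> by_cases h2 : g0 ≤ t <;> simp [h1, h2]
  rw [heq, lintegral_indicator_one measurableSet_Ico, Real.volume_Ico, ENNReal.rpow_one]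

lemma skeleton {Y : Type*} [MeasurableSpace Y] (ρ : Measure Y) [IsFiniteMeasure ρ]
    (σ : Measure (ℝ × ℝ)) [SFinite σ] (k : ℝ × ℝ → ℝ≥0∞) (hk : Measurable k) (p : ℝ)
    (hrep : ∀ f0 g0 : ℝ, 0 ≤ g0 →
      ∫⁻ z, k z * ({w : ℝ × ℝ | w.1 < f0 ∧ g0 ≤ w.2}.indicator 1 z) ∂σ
        = ENNReal.ofReal (f0 - g0) ^ p)
    (f g : Y → ℝ) (hf : Measurable f) (hg : Measurable g) (hg0 : ∀ᵐ x ∂ρ, 0 ≤ g x) :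
    ∫⁻ x, ENNReal.ofReal (f x - g x) ^ p ∂ρ
      = ∫⁻ z, k z * ρ {x | z.1 < f x ∧ g x ≤ z.2} ∂σ := by
  have h1 : ∫⁻ x, ENNReal.ofReal (f x - g x) ^ p ∂ρ
      = ∫⁻ x, ∫⁻ z, k z * ({w : ℝ × ℝ | w.1 < f x ∧ g x ≤ w.2}.indicator 1 z) ∂σ ∂ρ :=
    lintegral_congr_ae (hg0.mono fun x hx => (hrep (f x) (g x) hx).symm)
  rw [h1]
  have hset : MeasurableSet {q : Y × ℝ × ℝ | q.2.1 < f q.1 ∧ g q.1 ≤ q.2.2} := by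
    have : {q : Y × ℝ × ℝ | q.2.1 < f q.1 ∧ g q.1 ≤ q.2.2}
        = {q : Y × ℝ × ℝ | q.2.1 < f q.1} ∩ {q : Y × ℝ × ℝ | g q.1 ≤ q.2.2} := rfl
    rw [this]
    exact (measurableSet_lt (measurable_fst.comp measurable_snd)
        (hf.comp measurable_fst)).inter
      (measurableSet_le (hg.comp measurable_fst) (measurable_snd.comp measurable_snd))
  have hmeas : Measurable (Function.uncurry fun (x : Y) (z : ℝ × ℝ) =>
      k z * ({w : ℝ × ℝ | w.1 < f x ∧ g x ≤ w.2}.indicator 1 z)) := by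
    have heq : (Function.uncurry fun (x : Y) (z : ℝ × ℝ) =>
        k z * ({w : ℝ × ℝ | w.1 < f x ∧ g x ≤ w.2}.indicator 1 z))
        = fun q : Y × ℝ × ℝ => k q.2 *
          ({q' : Y × ℝ × ℝ | q'.2.1 < f q'.1 ∧ g q'.1 ≤ q'.2.2}.indicator 1 q) := by
      funext q
      simp only [Function.uncurry, Set.indicator_apply, Set.mem_setOf_eq, Pi.one_apply]
    rw [heq]
    exact (hk.comp measurable_snd).mul (Measurable.indicator measurable_const hset)
  rw [lintegral_lintegral_swap hmeas.aemeasurable]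
  apply lintegral_congr
  intro z
  have hsetx : MeasurableSet {x : Y | z.1 < f x ∧ g x ≤ z.2} := by
    have : {x : Y | z.1 < f x ∧ g x ≤ z.2}
        = {x : Y | z.1 < f x} ∩ {x : Y | g x ≤ z.2} := rfl
    rw [this]
    exact (measurableSet_lt measurable_const hf).inter (measurableSet_le hg measurable_const)
  calc ∫⁻ x, k z * ({w : ℝ × ℝ | w.1 < f x ∧ g x ≤ w.2}.indicator 1 z) ∂ρ
      = ∫⁻ x, ({x' : Y | z.1 < f x' ∧ g x' ≤ z.2}.indicator (fun _ => k z) x) ∂ρ := by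
        apply lintegral_congr
        intro x
        simp only [Set.indicator_apply, Set.mem_setOf_eq, Pi.one_apply]
        by_cases hx : z.1 < f x ∧ g x ≤ z.2 <;> simp [hx]
    _ = k z * ρ {x | z.1 < f x ∧ g x ≤ z.2} := by
        rw [lintegral_indicator_const hsetx]

end RearrProof
namespace RearrProof
open MeasureTheory Filter Topology Set ENNReal

lemma modelMeasure_singleton {K N : ℝ} (x : ℝ) : modelMeasure K N {x} = 0 := by
  rw [modelMeasure_apply (measurableSet_singleton x)]
  have h0 : volume ({x} ∩ Set.Ioo 0 (modelLength K N)) = 0 :=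
    measure_mono_null Set.inter_subset_left (Real.volume_singleton)
  exact setLIntegral_measure_zero _ _ h0

lemma modelMeasure_univ_lt_top {K N : ℝ} (hK : 0 < K) (hN : 1 < N) :
    modelMeasure K N Set.univ < ⊤ := by
  rcases le_or_gt (modelCoef K N) 0 with hc | hc
  · rw [modelMeasure_eq_zero hK hN hc]; simp
  · have h1 : modelMeasure K N Set.univ = modelMeasure K N (Set.Ioo 0 (modelLength K N)) := by
      rw [modelMeasure_apply MeasurableSet.univ, modelMeasure_apply measurableSet_Ioo,
        Set.univ_inter, Set.inter_self]
    rw [h1]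
    calc modelMeasure K N (Set.Ioo 0 (modelLength K N))
        ≤ ENNReal.ofReal (modelCoef K N)⁻¹ * volume (Set.Ioo 0 (modelLength K N)) :=
          modelMeasure_le hK hN hc measurableSet_Ioo
      _ < ⊤ := by
          rw [Real.volume_Ioo]
          exact ENNReal.mul_lt_top ENNReal.ofReal_lt_top ENNReal.ofReal_lt_top

lemma modelMeasure_ne_top {K N : ℝ} (hK : 0 < K) (hN : 1 < N) (s : Set ℝ) :
    modelMeasure K N s ≠ ⊤ :=
  ne_of_lt (lt_of_le_of_lt (measure_mono (Set.subset_univ s))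
    (modelMeasure_univ_lt_top hK hN))

lemma modelMeasure_Icc_pos {K N : ℝ} (hK : 0 < K) (hN : 1 < N) (hc : 0 < modelCoef K N)
    {x : ℝ} (hx : 0 < x) : 0 < modelMeasure K N (Set.Icc 0 x) := by
  rw [modelMeasure_apply measurableSet_Icc]
  have hL := modelLength_pos hK hN
  have hsub : Set.Ioo 0 (min x (modelLength K N))
      ⊆ Set.Icc 0 x ∩ Set.Ioo 0 (modelLength K N) := by
    intro t ht
    rcases Set.mem_Ioo.1 ht with ⟨h1, h2⟩
    exact ⟨⟨h1.le, (lt_min_iff.1 h2).1.le⟩, h1, (lt_min_iff.1 h2).2⟩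
  have hmono : ∫⁻ t in Set.Ioo 0 (min x (modelLength K N)),
        ENNReal.ofReal (modelDensity K N t / modelCoef K N) ∂volume
      ≤ ∫⁻ t in Set.Icc 0 x ∩ Set.Ioo 0 (modelLength K N),
        ENNReal.ofReal (modelDensity K N t / modelCoef K N) ∂volume :=
    lintegral_mono' (Measure.restrict_mono hsub le_rfl) le_rfl
  refine lt_of_lt_of_le ?_ hmono
  have hmeasf : Measurable fun t => ENNReal.ofReal (modelDensity K N t / modelCoef K N) :=
    ((density_measurable K N hN).div_const _).ennreal_ofReal
  rw [lintegral_pos_iff_support hmeasf]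
  have hsupp : Set.Ioo 0 (min x (modelLength K N))
      ⊆ Function.support fun t => ENNReal.ofReal (modelDensity K N t / modelCoef K N) := by
    intro t ht
    have htL : t ∈ Set.Ioo 0 (modelLength K N) :=
      ⟨ht.1, lt_of_lt_of_le ht.2 (min_le_right _ _)⟩
    exact ne_of_gt (ENNReal.ofReal_pos.2 (div_pos (density_pos hK hN htL) hc))
  calc (0 : ℝ≥0∞) < volume (Set.Ioo 0 (min x (modelLength K N))) := by
        rw [Real.volume_Ioo]
        exact ENNReal.ofReal_pos.2 (by rw [sub_zero]; exact lt_min hx hL)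
    _ = (volume.restrict (Set.Ioo 0 (min x (modelLength K N))))
          (Set.Ioo 0 (min x (modelLength K N))) := (Measure.restrict_apply_self _ _).symm
    _ ≤ (volume.restrict (Set.Ioo 0 (min x (modelLength K N))))
          (Function.support fun t => ENNReal.ofReal (modelDensity K N t / modelCoef K N)) :=
        measure_mono hsupp

lemma modelMeasure_Icc_add_Ioc {K N x y : ℝ} (hx : 0 ≤ x) (hxy : x ≤ y) :
    modelMeasure K N (Set.Icc 0 x) + modelMeasure K N (Set.Ioc x y)
      = modelMeasure K N (Set.Icc 0 y) := by
  rw [← measure_union ((Set.Iic_disjoint_Ioi le_rfl).mono Set.Icc_subset_Iic_self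
    Set.Ioc_subset_Ioi_self) measurableSet_Ioc, Set.Icc_union_Ioc_eq_Icc hx hxy]

lemma F_lip {K N : ℝ} (hK : 0 < K) (hN : 1 < N) (hc : 0 < modelCoef K N) {x y : ℝ}
    (hx : 0 ≤ x) (hxy : x ≤ y) :
    (modelMeasure K N (Set.Icc 0 y)).toReal
      ≤ (modelMeasure K N (Set.Icc 0 x)).toReal + (modelCoef K N)⁻¹ * (y - x) := by
  have hadd := modelMeasure_Icc_add_Ioc (K := K) (N := N) hx hxy
  have h1 : (modelMeasure K N (Set.Icc 0 y)).toReal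
      = (modelMeasure K N (Set.Icc 0 x)).toReal + (modelMeasure K N (Set.Ioc x y)).toReal := by
    rw [← hadd, ENNReal.toReal_add (modelMeasure_ne_top hK hN _) (modelMeasure_ne_top hK hN _)]
  rw [h1]
  have h2 : modelMeasure K N (Set.Ioc x y) ≤ ENNReal.ofReal ((modelCoef K N)⁻¹ * (y - x)) := by
    calc modelMeasure K N (Set.Ioc x y)
        ≤ ENNReal.ofReal (modelCoef K N)⁻¹ * volume (Set.Ioc x y) :=
          modelMeasure_le hK hN hc measurableSet_Ioc
      _ = ENNReal.ofReal ((modelCoef K N)⁻¹ * (y - x)) := by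
          rw [Real.volume_Ioc, ← ENNReal.ofReal_mul (by positivity)]
  have h3 := ENNReal.toReal_mono ENNReal.ofReal_ne_top h2
  rw [ENNReal.toReal_ofReal (by nlinarith [inv_nonneg.2 hc.le])] at h3
  linarith

lemma band_bound {K N : ℝ} (hK : 0 < K) (hN : 1 < N) (hc : 0 < modelCoef K N)
    {r c₁ c₂ : ℝ} (hc₁ : 0 ≤ c₁) :
    modelMeasure K N (Set.Icc 0 r ∩
        {x | c₁ ≤ (modelMeasure K N (Set.Icc 0 x)).toReal ∧
             (modelMeasure K N (Set.Icc 0 x)).toReal ≤ c₂})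
      ≤ ENNReal.ofReal (c₂ - c₁) := by
  set F := fun x : ℝ => (modelMeasure K N (Set.Icc 0 x)).toReal with hFdef
  set E := Set.Icc 0 r ∩ {x | c₁ ≤ F x ∧ F x ≤ c₂} with hEdef
  rcases E.eq_empty_or_nonempty with hE | hE
  · rw [hE, measure_empty]; exact zero_le'
  · obtain ⟨e0, he0⟩ := hE
    have hEsub : E ⊆ Set.Icc 0 r := Set.inter_subset_left
    have hbddB : BddBelow E := ⟨0, fun e he => (hEsub he).1⟩
    have hbddA : BddAbove E := ⟨r, fun e he => (hEsub he).2⟩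
    set α := sInf E with hα
    set β := sSup E with hβ
    have hα0 : 0 ≤ α := le_csInf ⟨e0, he0⟩ (fun e he => (hEsub he).1)
    have hαβ : α ≤ β := csInf_le_csSup ⟨e0, he0⟩ hbddB hbddA
    have hC : 0 ≤ (modelCoef K N)⁻¹ := inv_nonneg.2 hc.le
    have hFα : c₁ ≤ F α := by
      by_contra hcon
      push_neg at hcon
      have hε : 0 < (c₁ - F α) / ((modelCoef K N)⁻¹ + 1) :=
        div_pos (by linarith) (by positivity)
      obtain ⟨e, he, helt⟩ := Real.lt_sInf_add_pos ⟨e0, he0⟩ hε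
      have hαe : α ≤ e := csInf_le hbddB he
      have hlip := F_lip hK hN hc hα0 hαe
      have h1 : c₁ ≤ F e := he.2.1
      have h2 : (modelCoef K N)⁻¹ * (e - α)
          ≤ (modelCoef K N)⁻¹ * ((c₁ - F α) / ((modelCoef K N)⁻¹ + 1)) := by
        apply mul_le_mul_of_nonneg_left _ hC
        linarith
      have h3 : (modelCoef K N)⁻¹ * ((c₁ - F α) / ((modelCoef K N)⁻¹ + 1)) < c₁ - F α := by
        rw [div_eq_inv_mul, ← mul_assoc]
        have hd : (modelCoef K N)⁻¹ * ((modelCoef K N)⁻¹ + 1)⁻¹ < 1 := by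
          rw [← div_eq_mul_inv]
          apply (div_lt_one (by positivity)).2
          linarith
        nlinarith [sub_pos.2 hcon]
      linarith
    have hFβ : F β ≤ c₂ := by
      by_contra hcon
      push_neg at hcon
      have hε : 0 < (F β - c₂) / ((modelCoef K N)⁻¹ + 1) :=
        div_pos (by linarith) (by positivity)
      obtain ⟨e, he, helt⟩ := exists_lt_of_lt_csSup ⟨e0, he0⟩
        (show β - (F β - c₂) / ((modelCoef K N)⁻¹ + 1) < β by linarith)
      have heβ : e ≤ β := le_csSup hbddA he
      have he0' : 0 ≤ e := (hEsub he).1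
      have hlip := F_lip hK hN hc he0' heβ
      have h1 : F e ≤ c₂ := he.2.2
      have h2 : (modelCoef K N)⁻¹ * (β - e)
          ≤ (modelCoef K N)⁻¹ * ((F β - c₂) / ((modelCoef K N)⁻¹ + 1)) := by
        apply mul_le_mul_of_nonneg_left _ hC
        linarith
      have h3 : (modelCoef K N)⁻¹ * ((F β - c₂) / ((modelCoef K N)⁻¹ + 1)) < F β - c₂ := by
        rw [div_eq_inv_mul, ← mul_assoc]
        have hd : (modelCoef K N)⁻¹ * ((modelCoef K N)⁻¹ + 1)⁻¹ < 1 := by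
          rw [← div_eq_mul_inv]
          apply (div_lt_one (by positivity)).2
          linarith
        nlinarith [sub_pos.2 hcon]
      linarith
    have hsub2 : E ⊆ Set.Icc α β := fun e he => ⟨csInf_le hbddB he, le_csSup hbddA he⟩
    calc modelMeasure K N E ≤ modelMeasure K N (Set.Icc α β) := measure_mono hsub2
      _ ≤ modelMeasure K N {α} + modelMeasure K N (Set.Ioc α β) := by
          rw [← Set.Ioc_insert_left hαβ, Set.insert_eq]
          exact measure_union_le _ _
      _ = modelMeasure K N (Set.Ioc α β) := by rw [modelMeasure_singleton, zero_add]
      _ ≤ ENNReal.ofReal (c₂ - c₁) := by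
          have hadd := modelMeasure_Icc_add_Ioc (K := K) (N := N) hα0 hαβ
          have htr : (modelMeasure K N (Set.Ioc α β)).toReal = F β - F α := by
            have := congrArg ENNReal.toReal hadd
            rw [ENNReal.toReal_add (modelMeasure_ne_top hK hN _)
              (modelMeasure_ne_top hK hN _)] at this
            simp only [hFdef] at this ⊢
            linarith
          rw [← ENNReal.ofReal_toReal (modelMeasure_ne_top hK hN (Set.Ioc α β)), htr]
          exact ENNReal.ofReal_le_ofReal (by linarith)

end RearrProof
namespace RearrProof
open MeasureTheory Filter Topology Set ENNReal

lemma keyset {Y : Type*} [MeasurableSpace Y] (μ : Measure Y) [IsFiniteMeasure μ]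
    {K N : ℝ} (hK : 0 < K) (hN : 1 < N) (hc : 0 < modelCoef K N) {r : ℝ}
    (hvol : modelMeasure K N (Set.Icc 0 r) = μ Set.univ)
    {v w : Y → ℝ} (hv : Measurable v) (hw : Measurable w)
    (hv0 : ∀ x, 0 ≤ v x) (hw0 : ∀ x, 0 ≤ w x) (a b : ℝ) :
    modelMeasure K N (Set.Icc 0 r ∩ {x | a < rearr μ v K N x ∧ rearr μ w K N x ≤ b})
      ≤ μ {y | a < v y ∧ w y ≤ b} := by
  set c₁ := distribF μ w b with hc₁
  set c₂ := distribF μ v a with hc₂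
  have hsub : Set.Icc 0 r ∩ {x | a < rearr μ v K N x ∧ rearr μ w K N x ≤ b}
      ⊆ {(0:ℝ)} ∪ (Set.Icc 0 r ∩
          {x | c₁ ≤ (modelMeasure K N (Set.Icc 0 x)).toReal ∧
               (modelMeasure K N (Set.Icc 0 x)).toReal ≤ c₂}) := by
    rintro x ⟨hxr, hcond⟩
    by_cases hx0 : x = 0
    · exact Or.inl (by simp [hx0])
    right
    have hxpos : 0 < x := lt_of_le_of_ne hxr.1 (Ne.symm hx0)
    have hFpos : 0 < (modelMeasure K N (Set.Icc 0 x)).toReal :=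
      ENNReal.toReal_pos (ne_of_gt (modelMeasure_Icc_pos hK hN hc hxpos))
        (modelMeasure_ne_top hK hN _)
    have hFle : (modelMeasure K N (Set.Icc 0 x)).toReal ≤ (μ Set.univ).toReal := by
      rw [← hvol]
      exact ENNReal.toReal_mono (modelMeasure_ne_top hK hN _)
        (measure_mono (Set.Icc_subset_Icc_right hxr.2))
    simp only [Set.mem_setOf_eq, rearr] at hcond
    refine ⟨hxr, ?_, ?_⟩
    · exact distribF_le_of_genInv_le μ hw hFpos hcond.2
    · exact le_distribF_of_lt_genInv μ hv0 hFpos hFle hcond.1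
  calc modelMeasure K N (Set.Icc 0 r ∩ {x | a < rearr μ v K N x ∧ rearr μ w K N x ≤ b})
      ≤ modelMeasure K N ({(0:ℝ)} ∪ (Set.Icc 0 r ∩
          {x | c₁ ≤ (modelMeasure K N (Set.Icc 0 x)).toReal ∧
               (modelMeasure K N (Set.Icc 0 x)).toReal ≤ c₂})) := measure_mono hsub
    _ ≤ modelMeasure K N {(0:ℝ)} + modelMeasure K N (Set.Icc 0 r ∩
          {x | c₁ ≤ (modelMeasure K N (Set.Icc 0 x)).toReal ∧
               (modelMeasure K N (Set.Icc 0 x)).toReal ≤ c₂}) := measure_union_le _ _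
    _ = modelMeasure K N (Set.Icc 0 r ∩
          {x | c₁ ≤ (modelMeasure K N (Set.Icc 0 x)).toReal ∧
               (modelMeasure K N (Set.Icc 0 x)).toReal ≤ c₂}) := by
        rw [modelMeasure_singleton, zero_add]
    _ ≤ ENNReal.ofReal (c₂ - c₁) := band_bound hK hN hc ENNReal.toReal_nonneg
    _ ≤ μ {y | a < v y ∧ w y ≤ b} := by
        have hsub2 : {y | v y > a} ⊆ {y | a < v y ∧ w y ≤ b} ∪ {y | w y > b} := by
          intro y hy
          by_cases hwy : w y ≤ b
          · exact Or.inl ⟨hy, hwy⟩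
          · exact Or.inr (not_le.1 hwy)
        have hm : μ {y | v y > a} ≤ μ {y | a < v y ∧ w y ≤ b} + μ {y | w y > b} :=
          le_trans (measure_mono hsub2) (measure_union_le _ _)
        have htr := ENNReal.toReal_mono
          (by exact ENNReal.add_ne_top.2 ⟨measure_ne_top _ _, measure_ne_top _ _⟩) hm
        rw [ENNReal.toReal_add (measure_ne_top _ _) (measure_ne_top _ _)] at htr
        have hkey : c₂ - c₁ ≤ (μ {y | a < v y ∧ w y ≤ b}).toReal := by
          simp only [hc₁, hc₂, distribF]
          linarith
        calc ENNReal.ofReal (c₂ - c₁) ≤ ENNReal.ofReal (μ {y | a < v y ∧ w y ≤ b}).toReal :=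
              ENNReal.ofReal_le_ofReal hkey
          _ = μ {y | a < v y ∧ w y ≤ b} := ENNReal.ofReal_toReal (measure_ne_top _ _)

lemma measurable_ereal_toReal : Measurable EReal.toReal := by
  measurability

lemma F_eq_zero_of_nonpos {K N : ℝ} {x : ℝ} (hx : x ≤ 0) :
    modelMeasure K N (Set.Icc 0 x) = 0 := by
  rcases lt_or_eq_of_le hx with h | h
  · rw [Set.Icc_eq_empty (not_le.2 h), measure_empty]
  · rw [h, Set.Icc_self]
    exact modelMeasure_singleton 0

lemma rearr_measurable {Y : Type*} [MeasurableSpace Y] (μ : Measure Y) [IsFiniteMeasure μ]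
    {K N : ℝ} (hK : 0 < K) (hN : 1 < N) (hc : 0 < modelCoef K N)
    {v : Y → ℝ} (hv : Measurable v) (hv0 : ∀ x, 0 ≤ v x) :
    Measurable (fun x => rearr μ v K N x) := by
  set A : ℝ → EReal := fun x => if 0 < x then
    (((genInv μ v ((modelMeasure K N (Set.Icc 0 x)).toReal) : ℝ)) : EReal) else ⊤ with hA
  have hFmono : Monotone (fun x : ℝ => (modelMeasure K N (Set.Icc 0 x)).toReal) :=
    fun x y hxy => ENNReal.toReal_mono (modelMeasure_ne_top hK hN _)
      (measure_mono (Set.Icc_subset_Icc_right hxy))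
  have hAanti : Antitone A := by
    intro x y hxy
    by_cases hx : 0 < x
    · have hy : 0 < y := lt_of_lt_of_le hx hxy
      simp only [hA, if_pos hx, if_pos hy, EReal.coe_le_coe_iff]
      exact genInv_anti μ hv hv0
        (ENNReal.toReal_pos (ne_of_gt (modelMeasure_Icc_pos hK hN hc hx))
          (modelMeasure_ne_top hK hN _))
        (hFmono hxy)
    · by_cases hy : 0 < y
      · simp only [hA, if_neg hx, if_pos hy]
        exact le_top
      · have h1 : A y = ⊤ := by simp only [hA, if_neg hy]
        have h2 : A x = ⊤ := by simp only [hA, if_neg hx]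
        rw [h1, h2]
  have hAmeas : Measurable A := hAanti.measurable
  have heq : (fun x => rearr μ v K N x) = fun x =>
      if (modelMeasure K N (Set.Icc 0 x)).toReal = 0 then essSup v μ
      else (A x).toReal := by
    funext x
    by_cases hFx : (modelMeasure K N (Set.Icc 0 x)).toReal = 0
    · simp [rearr, genInv, hFx]
    · rw [if_neg hFx]
      have hx : 0 < x := by
        by_contra h
        push_neg at h
        exact hFx (by rw [F_eq_zero_of_nonpos h]; simp)
      simp only [hA, if_pos hx, EReal.toReal_coe, rearr]
  rw [heq]
  have hFmeas : Measurable (fun x : ℝ => (modelMeasure K N (Set.Icc 0 x)).toReal) :=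
    hFmono.measurable
  exact Measurable.ite (hFmeas (measurableSet_singleton 0)) measurable_const
    (measurable_ereal_toReal.comp hAmeas)

end RearrProof
namespace RearrProof
open MeasureTheory Filter Topology Set ENNReal

lemma ofReal_abs_rpow_split {p : ℝ} (hp : 0 < p) (c d : ℝ) :
    ENNReal.ofReal |c - d| ^ p
      = ENNReal.ofReal (c - d) ^ p + ENNReal.ofReal (d - c) ^ p := by
  rcases le_total d c with h | h
  · rw [abs_of_nonneg (by linarith), ENNReal.ofReal_of_nonpos (by linarith : d - c ≤ 0),
      ENNReal.zero_rpow_of_pos hp, add_zero]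
  · rw [abs_of_nonpos (by linarith : c - d ≤ 0),
      ENNReal.ofReal_of_nonpos (by linarith : c - d ≤ 0),
      ENNReal.zero_rpow_of_pos hp, zero_add, neg_sub]

lemma rearr_ae_nonneg {Y : Type*} [MeasurableSpace Y] (μ : Measure Y) [IsFiniteMeasure μ]
    {K N : ℝ} (hK : 0 < K) (hN : 1 < N) (hc : 0 < modelCoef K N) {r : ℝ}
    (hvol : modelMeasure K N (Set.Icc 0 r) = μ Set.univ)
    {u : Y → ℝ} (hu0 : ∀ x, 0 ≤ u x) :
    ∀ᵐ x ∂((modelMeasure K N).restrict (Set.Icc 0 r)), 0 ≤ rearr μ u K N x := by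
  have h0 : (modelMeasure K N).restrict (Set.Icc 0 r) {(0:ℝ)} = 0 :=
    le_antisymm (le_trans (Measure.restrict_le_self _)
      (le_of_eq (modelMeasure_singleton 0))) zero_le'
  have hmem := ae_restrict_mem (μ := modelMeasure K N) (s := Set.Icc 0 r) measurableSet_Icc
  have hne : ∀ᵐ x ∂((modelMeasure K N).restrict (Set.Icc 0 r)), x ≠ 0 := by
    rw [ae_iff]
    have hset : {x : ℝ | ¬ x ≠ 0} = {0} := by ext y; simp
    rw [hset]
    exact h0
  filter_upwards [hmem, hne] with x hx hxne
  have hxpos : 0 < x := lt_of_le_of_ne hx.1 (Ne.symm hxne)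
  have hFpos : 0 < (modelMeasure K N (Set.Icc 0 x)).toReal :=
    ENNReal.toReal_pos (ne_of_gt (modelMeasure_Icc_pos hK hN hc hxpos))
      (modelMeasure_ne_top hK hN _)
  have hFle : (modelMeasure K N (Set.Icc 0 x)).toReal ≤ (μ Set.univ).toReal := by
    rw [← hvol]
    exact ENNReal.toReal_mono (modelMeasure_ne_top hK hN _)
      (measure_mono (Set.Icc_subset_Icc_right hx.2))
  exact genInv_nonneg μ hu0 hFpos hFle

lemma main_ineq_core {Y : Type*} [MeasurableSpace Y] (μ : Measure Y) [IsFiniteMeasure μ]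
    {K N p : ℝ} (hK : 0 < K) (hN : 1 < N) (hp : 0 < p) (hc : 0 < modelCoef K N)
    {r : ℝ} (hvol : modelMeasure K N (Set.Icc 0 r) = μ Set.univ)
    (σ : Measure (ℝ × ℝ)) [SFinite σ] (k : ℝ × ℝ → ℝ≥0∞) (hk : Measurable k)
    (hrep : ∀ f0 g0 : ℝ, 0 ≤ g0 →
      ∫⁻ z, k z * ({w' : ℝ × ℝ | w'.1 < f0 ∧ g0 ≤ w'.2}.indicator 1 z) ∂σ
        = ENNReal.ofReal (f0 - g0) ^ p)
    {v w : Y → ℝ} (hv : Measurable v) (hw : Measurable w)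
    (hv0 : ∀ x, 0 ≤ v x) (hw0 : ∀ x, 0 ≤ w x) :
    ∫⁻ x in Set.Icc 0 r, ENNReal.ofReal |rearr μ v K N x - rearr μ w K N x| ^ p
        ∂(modelMeasure K N)
      ≤ ∫⁻ y, ENNReal.ofReal |v y - w y| ^ p ∂μ := by
  haveI : IsFiniteMeasure (modelMeasure K N) := ⟨modelMeasure_univ_lt_top hK hN⟩
  have hf : Measurable (fun x => rearr μ v K N x) := rearr_measurable μ hK hN hc hv hv0
  have hg : Measurable (fun x => rearr μ w K N x) := rearr_measurable μ hK hN hc hw hw0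
  have hsplit : ∫⁻ x in Set.Icc 0 r,
        ENNReal.ofReal |rearr μ v K N x - rearr μ w K N x| ^ p ∂(modelMeasure K N)
      = (∫⁻ x in Set.Icc 0 r,
          ENNReal.ofReal (rearr μ v K N x - rearr μ w K N x) ^ p ∂(modelMeasure K N))
        + ∫⁻ x in Set.Icc 0 r,
          ENNReal.ofReal (rearr μ w K N x - rearr μ v K N x) ^ p ∂(modelMeasure K N) := by
    rw [← lintegral_add_left (by fun_prop)]
    exact lintegral_congr fun x => ofReal_abs_rpow_split hp _ _
  have hsplit2 : ∫⁻ y, ENNReal.ofReal |v y - w y| ^ p ∂μ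
      = (∫⁻ y, ENNReal.ofReal (v y - w y) ^ p ∂μ)
        + ∫⁻ y, ENNReal.ofReal (w y - v y) ^ p ∂μ := by
    rw [← lintegral_add_left (by fun_prop)]
    exact lintegral_congr fun y => ofReal_abs_rpow_split hp _ _
  rw [hsplit, hsplit2]
  have hcmp : ∀ (v' w' : Y → ℝ), Measurable v' → Measurable w' → (∀ x, 0 ≤ v' x) →
      (∀ x, 0 ≤ w' x) →
      (∫⁻ x in Set.Icc 0 r,
          ENNReal.ofReal (rearr μ v' K N x - rearr μ w' K N x) ^ p ∂(modelMeasure K N))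
        ≤ ∫⁻ y, ENNReal.ofReal (v' y - w' y) ^ p ∂μ := by
    intro v' w' hv' hw' hv0' hw0'
    have hf' : Measurable (fun x => rearr μ v' K N x) := rearr_measurable μ hK hN hc hv' hv0'
    have hg' : Measurable (fun x => rearr μ w' K N x) := rearr_measurable μ hK hN hc hw' hw0'
    rw [skeleton ((modelMeasure K N).restrict (Set.Icc 0 r)) σ k hk p hrep _ _ hf' hg'
        (rearr_ae_nonneg μ hK hN hc hvol hw0'),
      skeleton μ σ k hk p hrep v' w' hv' hw' (Filter.Eventually.of_forall hw0')]
    apply lintegral_mono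
    intro z
    apply mul_le_mul_right
    have hsetm : MeasurableSet {x : ℝ | z.1 < rearr μ v' K N x ∧ rearr μ w' K N x ≤ z.2} :=
      (measurableSet_lt measurable_const hf').inter (measurableSet_le hg' measurable_const)
    rw [Measure.restrict_apply hsetm, Set.inter_comm]
    exact keyset μ hK hN hc hvol hv' hw' hv0' hw0' z.1 z.2
  exact add_le_add (hcmp v w hv hw hv0 hw0) (hcmp w v hw hv hw0 hv0)

lemma main_ineq {Y : Type*} [MeasurableSpace Y] (μ : Measure Y) [IsFiniteMeasure μ]
    {K N p : ℝ} (hK : 0 < K) (hN : 1 < N) (hp : 1 ≤ p) (hc : 0 < modelCoef K N)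
    {r : ℝ} (hvol : modelMeasure K N (Set.Icc 0 r) = μ Set.univ)
    {v w : Y → ℝ} (hv : Measurable v) (hw : Measurable w)
    (hv0 : ∀ x, 0 ≤ v x) (hw0 : ∀ x, 0 ≤ w x) :
    ∫⁻ x in Set.Icc 0 r, ENNReal.ofReal |rearr μ v K N x - rearr μ w K N x| ^ p
        ∂(modelMeasure K N)
      ≤ ∫⁻ y, ENNReal.ofReal |v y - w y| ^ p ∂μ := by
  rcases eq_or_lt_of_le hp with hp1 | hp1
  · subst hp1
    exact main_ineq_core μ hK hN one_pos hc hvol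
      (volume.map (fun t : ℝ => (t, t))) (fun _ => 1) measurable_const
      (fun f0 g0 hg0 => rep_one f0 g0 hg0) hv hw hv0 hw0
  · exact main_ineq_core μ hK hN (by linarith) hc hvol
      volume (kerGT p) (kerGT_measurable p)
      (fun f0 g0 hg0 => rep_gt_one hp1 f0 g0 hg0) hv hw hv0 hw0

end RearrProof

/-- the monotone rearrangement operator is continuous from `L^p(Ω,m)` to
`L^p([0,r], m_{K,N})`: if `u_n → u` in `L^p` then `u_n* → u*` in `L^p`. -/
theorem rearr_continuous_Lp {X : Type*} [MetricSpace X] [MeasurableSpace X]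
    (m : Measure X) [IsFiniteMeasure m] (K N p : ℝ) (hK : 0 < K) (hN : 1 < N) (hp : 1 ≤ p)
    (Ω : Set X) (hΩ : IsOpen Ω) (r : ℝ) (hr : r ∈ Set.Ioo 0 (modelLength K N))
    (hvol : modelMeasure K N (Set.Icc 0 r) = m Ω)
    (un : ℕ → X → ℝ) (u : X → ℝ)
    (hmeas : ∀ n, Measurable (un n)) (humeas : Measurable u)
    (hnn : ∀ n x, 0 ≤ un n x) (hunn : ∀ x, 0 ≤ u x)
    (hconv : Tendsto (fun n => ∫⁻ x in Ω, ENNReal.ofReal |un n x - u x| ^ p ∂m)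
      atTop (𝓝 0)) :
    Tendsto (fun n => ∫⁻ x in Set.Icc 0 r,
        ENNReal.ofReal |rearr (m.restrict Ω) (un n) K N x - rearr (m.restrict Ω) u K N x| ^ p
          ∂(modelMeasure K N)) atTop (𝓝 0) := by
  rcases le_or_gt (modelCoef K N) 0 with hcoef | hcoef
  · have h0 : modelMeasure K N = 0 := RearrProof.modelMeasure_eq_zero hK hN hcoef
    have heq : (fun n => ∫⁻ x in Set.Icc 0 r,
        ENNReal.ofReal |rearr (m.restrict Ω) (un n) K N x - rearr (m.restrict Ω) u K N x| ^ p
          ∂(modelMeasure K N)) = fun _ => 0 := by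
      funext n
      rw [h0, Measure.restrict_zero, lintegral_zero_measure]
    rw [heq]
    exact tendsto_const_nhds
  · have hvol' : modelMeasure K N (Set.Icc 0 r) = (m.restrict Ω) Set.univ := by
      rw [hvol.symm.symm, Measure.restrict_apply_univ]
    refine tendsto_of_tendsto_of_tendsto_of_le_of_le tendsto_const_nhds hconv
      (fun n => zero_le') (fun n => ?_)
    exact RearrProof.main_ineq (m.restrict Ω) hK hN hp hcoef hvol' (hmeas n) humeas
      (hnn n) hunn
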